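/- Let v_0, v_1, …, v_n ∈ S¹ be points with ‖v_j − v_0‖ < √2 (Euclidean norm) for all j, and let w_0, …, w_n ≥ 0 be weights with Σ_j w_j = 1. Then the function m ↦ Σ_j w_j · d_{S¹}(m, v_j)² on S¹ attains its minimum at exactly one point; that is, the set {v_j} has a unique weighted Karcher mean with respect to the geodesic distance on S¹ (for any such weights). -/

import Mathlib

/-- Geodesic (arc-length) distance on the unit circle `S¹ ⊆ ℂ`
(total circumference `2π`). -/
noncomputable def gdist (z w : Circle) : ℝ := |Complex.arg ((z / w : Circle) : ℂ)|

open Real Finset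

noncomputable def circA (x : ℝ) : ℝ := |Complex.arg ((Circle.exp x : Circle) : ℂ)|

lemma circA_abs {x : ℝ} (h1 : -π < x) (h2 : x ≤ π) : circA x = |x| := by
  rw [circA, Circle.arg_exp h1 h2]

lemma circA_sub_two_pi (x : ℝ) : circA (x - 2 * π) = circA x := by
  unfold circA
  congr 2
  have := Circle.exp_add_two_pi (x - 2 * π)
  rw [sub_add_cancel] at this
  rw [this]

lemma circA_neg (x : ℝ) : circA (-x) = circA x := by
  unfold circA
  rw [Circle.exp_neg]
  rw [show ((((Circle.exp x)⁻¹ : Circle)) : ℂ) = ((Circle.exp x : Circle) : ℂ)⁻¹ by simp,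
    Complex.arg_inv]
  split <;> simp_all

lemma sum_sq_expand {n : ℕ} (w θ : Fin (n+1) → ℝ) (hws : ∑ j, w j = 1) (x : ℝ) :
    ∑ j, w j * (x - θ j)^2
      = (∑ j, w j * θ j ^2) - 2 * x * (∑ j, w j * θ j) + x^2 := by
  have h : ∀ j ∈ Finset.univ, w j * (x - θ j)^2
      = w j * θ j^2 - 2*x*(w j * θ j) + x^2 * w j := by
    intro j _; ring
  rw [Finset.sum_congr rfl h, Finset.sum_add_distrib, Finset.sum_sub_distrib,
    ← Finset.mul_sum, ← Finset.mul_sum, hws]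
  ring

lemma key_pos (n : ℕ) (θ w : Fin (n+1) → ℝ) (hθ : ∀ j, |θ j| < π/2)
    (hw : ∀ j, 0 ≤ w j) (hws : ∑ j, w j = 1) (t : ℝ) (ht1 : π/2 < t) (ht2 : t ≤ π) :
    ∑ j, w j * (∑ i, w i * θ i - θ j)^2 < ∑ j, w j * circA (t - θ j)^2 := by
  have hπ := Real.pi_pos
  set μ := ∑ i, w i * θ i with hμ
  have hθ' : ∀ j, -(π/2) < θ j ∧ θ j < π/2 := fun j => abs_lt.mp (hθ j)
  set S : Finset (Fin (n+1)) := Finset.univ.filter (fun j => π < t - θ j) with hS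
  set W := ∑ j ∈ S, w j with hW
  set X := ∑ j ∈ S, w j * (t - θ j - π) with hX
  set s := t - π/2 with hs
  clear_value W X s
  have hterm : ∀ j, circA (t - θ j)^2
      = (t - θ j)^2 - 4*π*(if π < t - θ j then t - θ j - π else 0) := by
    intro j
    obtain ⟨hj1, hj2⟩ := hθ' j
    by_cases hc : π < t - θ j
    · rw [if_pos hc, ← circA_sub_two_pi (t - θ j), circA_abs (by linarith) (by linarith),
        abs_of_nonpos (by linarith)]
      ring
    · push_neg at hc
      rw [if_neg (not_lt.mpr hc), circA_abs (by linarith) hc, sq_abs]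
      ring
  have hsum : ∑ j, w j * circA (t - θ j)^2 = (∑ j, w j * (t - θ j)^2) - 4*π*X := by
    calc ∑ j, w j * circA (t - θ j)^2
        = ∑ j, (w j * (t - θ j)^2
            - 4*π*(if π < t - θ j then w j * (t - θ j - π) else 0)) := by
          refine Finset.sum_congr rfl fun j _ => ?_
          rw [hterm j]; split <;> ring
      _ = (∑ j, w j * (t - θ j)^2) - 4*π*X := by
          rw [Finset.sum_sub_distrib, ← Finset.mul_sum, hX, Finset.sum_filter]
  have hW0 : 0 ≤ W := by
    rw [hW]; exact Finset.sum_nonneg fun j _ => hw j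
  have hW1 : W ≤ 1 := by
    rw [hW, ← hws]
    exact Finset.sum_le_sum_of_subset_of_nonneg (Finset.subset_univ S) fun j _ _ => hw j
  have hmemS : ∀ j ∈ S, π < t - θ j := by
    intro j hj
    simpa [hS] using hj
  have hX0 : 0 ≤ X := by
    rw [hX]
    exact Finset.sum_nonneg fun j hj => mul_nonneg (hw j) (by linarith [hmemS j hj])
  have hXW : X ≤ W * s := by
    rw [hX, hW, Finset.sum_mul]
    refine Finset.sum_le_sum fun j hj => ?_
    have := (hθ' j).1
    exact mul_le_mul_of_nonneg_left (by linarith [hs]) (hw j)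
  have hmean : μ ≤ W*(t-π) - X + (1-W)*(π/2) := by
    have h1 : (∑ j ∈ S, w j * θ j)
        + (∑ j ∈ Finset.univ.filter (fun j => ¬ π < t - θ j), w j * θ j) = μ := by
      rw [hμ, hS]
      exact Finset.sum_filter_add_sum_filter_not _ _ _
    have h2 : W + (∑ j ∈ Finset.univ.filter (fun j => ¬ π < t - θ j), w j) = 1 := by
      rw [hW, hS, ← hws]
      exact Finset.sum_filter_add_sum_filter_not _ _ _
    have h3 : ∑ j ∈ S, w j * θ j = W*(t-π) - X := by
      rw [hW, hX, Finset.sum_mul, ← Finset.sum_sub_distrib]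
      refine Finset.sum_congr rfl fun j hj => by ring
    have h4 : (∑ j ∈ Finset.univ.filter (fun j => ¬ π < t - θ j), w j * θ j)
        ≤ ∑ j ∈ Finset.univ.filter (fun j => ¬ π < t - θ j), w j * (π/2) :=
      Finset.sum_le_sum fun j _ => mul_le_mul_of_nonneg_left (le_of_lt (hθ' j).2) (hw j)
    have h5 : ∑ j ∈ Finset.univ.filter (fun j => ¬ π < t - θ j), w j * (π/2)
        = (1-W)*(π/2) := by
      rw [← Finset.sum_mul]
      have : (∑ j ∈ Finset.univ.filter (fun j => ¬ π < t - θ j), w j) = 1 - W := by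
        linarith
      rw [this]
    linarith
  have hid : (1-W)*s + W*π = t - W*(t-π) - (1-W)*(π/2) := by rw [hs]; ring
  have hP : (1-W)*s + W*π + X ≤ t - μ := by linarith
  have hPpos : 0 < (1-W)*s + W*π + X := by
    have hs0 : 0 < s := by rw [hs]; linarith
    nlinarith [mul_nonneg hW0 (by linarith : (0:ℝ) ≤ π - s)]
  have hgoal : 4*π*X < (t - μ)^2 := by
    have hs0 : 0 < s := by rw [hs]; linarith
    have hs1 : s ≤ π/2 := by rw [hs]; linarith
    rcases eq_or_lt_of_le hW0 with hWeq | hWpos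
    · have hX00 : X = 0 := le_antisymm (by nlinarith) hX0
      rw [hX00]
      nlinarith
    · have hXW' : X < W * s := by
        have hex : ∃ j ∈ S, 0 < w j := by
          by_contra hco
          push_neg at hco
          have : W ≤ 0 := hW ▸ Finset.sum_nonpos fun j hj => hco j hj
          linarith
        obtain ⟨j0, hj0S, hj0⟩ := hex
        rw [hX, hW, Finset.sum_mul]
        refine Finset.sum_lt_sum
          (fun j hj => mul_le_mul_of_nonneg_left
            (by linarith [(hθ' j).1, hs]) (hw j)) ⟨j0, hj0S, ?_⟩
        have := (hθ' j0).1
        exact mul_lt_mul_of_pos_left (by linarith [hs]) hj0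
      have hcore : 4*π*X < ((1-W)*s + W*π + X)^2 := by
        nlinarith [sq_nonneg (s - W*π), sq_nonneg (W*s - X), mul_pos (sub_pos.mpr hXW') hπ]
      calc 4*π*X < ((1-W)*s + W*π + X)^2 := hcore
        _ ≤ (t-μ)^2 := pow_le_pow_left₀ (le_of_lt hPpos) (by linarith) 2
  rw [hsum, sum_sq_expand w θ hws t, sum_sq_expand w θ hws μ, ← hμ]
  nlinarith

lemma key (n : ℕ) (θ w : Fin (n+1) → ℝ) (hθ : ∀ j, |θ j| < π/2)
    (hw : ∀ j, 0 ≤ w j) (hws : ∑ j, w j = 1) (t : ℝ) (ht1 : -π < t) (ht2 : t ≤ π)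
    (hne : t ≠ ∑ i, w i * θ i) :
    ∑ j, w j * (∑ i, w i * θ i - θ j)^2 < ∑ j, w j * circA (t - θ j)^2 := by
  have hπ := Real.pi_pos
  by_cases habs : |t| ≤ π/2
  · obtain ⟨h1, h2⟩ := abs_le.mp habs
    have hA : ∀ j, circA (t - θ j)^2 = (t - θ j)^2 := by
      intro j
      obtain ⟨hj1, hj2⟩ := abs_lt.mp (hθ j)
      rw [circA_abs (by linarith) (by linarith), sq_abs]
    have hrw : ∑ j, w j * circA (t - θ j)^2 = ∑ j, w j * (t - θ j)^2 :=
      Finset.sum_congr rfl fun j _ => by rw [hA j]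
    rw [hrw, sum_sq_expand w θ hws t, sum_sq_expand w θ hws _]
    have hd : t - (∑ i, w i * θ i) ≠ 0 := sub_ne_zero.mpr hne
    have h0 : 0 < (t - ∑ i, w i * θ i)^2 := by
      rcases hd.lt_or_gt with h | h <;> nlinarith
    nlinarith
  · push_neg at habs
    rcases le_or_gt t 0 with hneg | hpos
    · have ht' : π/2 < -t := by
        rw [abs_of_nonpos hneg] at habs; linarith
      have h := key_pos n (fun j => -θ j) w
        (by intro j; rw [abs_neg]; exact hθ j) hw hws (-t) ht' (by linarith)
      have e1 : ∑ i, w i * -θ i = -(∑ i, w i * θ i) := by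
        rw [← Finset.sum_neg_distrib]
        exact Finset.sum_congr rfl fun j _ => by ring
      rw [e1] at h
      calc ∑ j, w j * (∑ i, w i * θ i - θ j)^2
          = ∑ j, w j * (-(∑ i, w i * θ i) - -θ j)^2 :=
            Finset.sum_congr rfl fun j _ => by ring
        _ < ∑ j, w j * circA (-t - -θ j)^2 := h
        _ = ∑ j, w j * circA (t - θ j)^2 := Finset.sum_congr rfl fun j _ => by
            rw [show -t - -θ j = -(t - θ j) by ring, circA_neg]
    · have hts : π/2 < t := by rwa [abs_of_pos hpos] at habs
      exact key_pos n θ w hθ hw hws t hts ht2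



/-- If `v 0, …, v n ∈ S¹` satisfy `‖v j − v 0‖ < √2` (Euclidean norm)
for all `j`, and `w 0, …, w n ≥ 0` are weights summing to `1`, then the function
`m ↦ ∑ j, w j * d_{S¹}(m, v j)²` attains its minimum on `S¹` at exactly one point:
the points have a unique weighted Karcher mean for the geodesic distance. -/
theorem unique_karcher_mean (n : ℕ) (v : Fin (n + 1) → Circle)
    (hv : ∀ j, ‖(v j : ℂ) - (v 0 : ℂ)‖ < Real.sqrt 2)
    (w : Fin (n + 1) → ℝ) (hw : ∀ j, 0 ≤ w j) (hws : ∑ j, w j = 1) :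
    ∃! m : Circle, ∀ m' : Circle,
      ∑ j, w j * gdist m (v j) ^ 2 ≤ ∑ j, w j * gdist m' (v j) ^ 2 := by
  have hπ := Real.pi_pos
  set θf : Fin (n+1) → ℝ := fun j => Complex.arg ((v j / v 0 : Circle) : ℂ) with hθf
  have hθlt : ∀ j, |θf j| < π/2 := by
    intro j
    have harg1 := Complex.neg_pi_lt_arg ((v j / v 0 : Circle) : ℂ)
    have harg2 := Complex.arg_le_pi ((v j / v 0 : Circle) : ℂ)
    have hne0 : ((v 0 : ℂ)) ≠ 0 := Circle.coe_ne_zero _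
    have hnorm : ‖((v j / v 0 : Circle) : ℂ) - 1‖ = ‖(v j : ℂ) - (v 0 : ℂ)‖ := by
      rw [Circle.coe_div,
        show (v j : ℂ)/(v 0 : ℂ) - 1 = ((v j : ℂ) - (v 0:ℂ))/(v 0:ℂ) by field_simp,
        norm_div]
      simp [Circle.norm_coe]
    have hcos : ((v j / v 0 : Circle) : ℂ) = Complex.exp ((θf j : ℂ) * Complex.I) := by
      conv_lhs => rw [← Circle.exp_arg (v j / v 0), Circle.coe_exp]
    have h2 : ‖((v j / v 0 : Circle) : ℂ) - 1‖^2 = 2 - 2*Real.cos (θf j) := by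
      rw [hcos, Complex.exp_mul_I, ← Complex.ofReal_cos, ← Complex.ofReal_sin,
        Complex.sq_norm, Complex.normSq_apply]
      simp [Complex.cos_ofReal_re, Complex.sin_ofReal_re]
      nlinarith [Real.sin_sq_add_cos_sq (θf j)]
    have h3 : ‖((v j / v 0 : Circle) : ℂ) - 1‖^2 < 2 := by
      have := hv j
      rw [← hnorm] at this
      exact (Real.lt_sqrt (norm_nonneg _)).mp this
    have hcospos : 0 < Real.cos (θf j) := by linarith
    rw [abs_lt]
    constructor
    · by_contra hc
      push_neg at hc
      have : Real.cos (θf j) ≤ 0 := by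
        rw [← Real.cos_neg]
        exact Real.cos_nonpos_of_pi_div_two_le_of_le (by linarith) (by linarith)
      linarith
    · by_contra hc
      push_neg at hc
      have : Real.cos (θf j) ≤ 0 :=
        Real.cos_nonpos_of_pi_div_two_le_of_le hc (by linarith)
      linarith
  have hgd : ∀ (m' : Circle) (j : Fin (n+1)),
      gdist m' (v j) = circA (Complex.arg ((m' / v 0 : Circle) : ℂ) - θf j) := by
    intro m' j
    have hkey : Circle.exp (Complex.arg ((m' / v 0 : Circle) : ℂ) - θf j) = m' / v j := by
      rw [Circle.exp_sub, Circle.exp_arg]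
      have e2 : Circle.exp (θf j) = v j / v 0 := Circle.exp_arg _
      rw [e2]
      ext; push_cast; field_simp
    rw [gdist, circA, hkey]
  obtain ⟨μ, hμ⟩ : ∃ x, x = ∑ j, w j * θf j := ⟨_, rfl⟩
  have hμabs : |μ| ≤ π/2 := by
    rw [hμ]
    calc |∑ j, w j * θf j| ≤ ∑ j, |w j * θf j| := Finset.abs_sum_le_sum_abs _ _
      _ ≤ ∑ j, w j * (π/2) := Finset.sum_le_sum fun j _ => by
          rw [abs_mul, abs_of_nonneg (hw j)]
          exact mul_le_mul_of_nonneg_left (le_of_lt (hθlt j)) (hw j)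
      _ = π/2 := by rw [← Finset.sum_mul, hws, one_mul]
  obtain ⟨hμ1, hμ2⟩ := abs_le.mp hμabs
  set m : Circle := v 0 * Circle.exp μ with hm
  have htm : Complex.arg ((m / v 0 : Circle) : ℂ) = μ := by
    have hmd : m / v 0 = Circle.exp μ := by rw [hm]; ext; push_cast; field_simp
    rw [hmd]
    exact Circle.arg_exp (by linarith) (by linarith)
  have hFm : ∑ j, w j * gdist m (v j)^2 = ∑ j, w j * (μ - θf j)^2 := by
    refine Finset.sum_congr rfl fun j _ => ?_
    obtain ⟨hj1, hj2⟩ := abs_lt.mp (hθlt j)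
    rw [hgd m j, htm, circA_abs (by linarith) (by linarith), sq_abs]
  have hF : ∀ m' : Circle, ∑ j, w j * gdist m' (v j)^2
      = ∑ j, w j * circA (Complex.arg ((m' / v 0 : Circle) : ℂ) - θf j)^2 :=
    fun m' => Finset.sum_congr rfl fun j _ => by rw [hgd m' j]
  refine ⟨m, ?_, ?_⟩
  · intro m'
    rw [hFm, hF m']
    by_cases hne : Complex.arg ((m' / v 0 : Circle) : ℂ) = μ
    · rw [hne]
      refine le_of_eq (Finset.sum_congr rfl fun j _ => ?_)
      obtain ⟨hj1, hj2⟩ := abs_lt.mp (hθlt j)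
      rw [circA_abs (by linarith) (by linarith), sq_abs]
    · have hk := key n θf w hθlt hw hws (Complex.arg ((m' / v 0 : Circle) : ℂ))
        (Complex.neg_pi_lt_arg _) (Complex.arg_le_pi _) (by rw [← hμ]; exact hne)
      rw [← hμ] at hk
      exact le_of_lt hk
  · intro m' hm'
    have h1 := hm' m
    rw [hFm, hF m'] at h1
    have ht : Complex.arg ((m' / v 0 : Circle) : ℂ) = μ := by
      by_contra hne
      have hk := key n θf w hθlt hw hws (Complex.arg ((m' / v 0 : Circle) : ℂ))
        (Complex.neg_pi_lt_arg _) (Complex.arg_le_pi _) (by rw [← hμ]; exact hne)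
      rw [← hμ] at hk
      exact absurd h1 (not_le.mpr hk)
    calc m' = v 0 * Circle.exp (Complex.arg ((m' / v 0 : Circle) : ℂ)) := by
          rw [Circle.exp_arg]; ext; push_cast; field_simp
      _ = m := by rw [ht, hm]
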